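/- Let ρ = ½(I + r·σ) be a single-qubit density matrix with Bloch vector r ∈ ℝ³, ‖r‖₂ ≤ 1, let h ∈ ℝ³ with ‖h‖₂ = 1, and set E := h·r. Assume the stabilizer slice {s ∈ ℝ³ : ‖s‖₁ ≤ 1, h·s = E} is nonempty. Then S(ρ) < min{ S(½(I + s·σ)) : ‖s‖₁ ≤ 1, h·s = E } if and only if ‖r‖₂ > R⋆(E), where R⋆(E) := max{ ‖s‖₂ : ‖s‖₁ ≤ 1, h·s = E }. -/

import Mathlib

open Matrix BigOperators

noncomputable section

/-- The Pauli X matrix. -/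
def PX : Matrix (Fin 2) (Fin 2) ℂ := !![0, 1; 1, 0]
/-- The Pauli Y matrix. -/
def PY : Matrix (Fin 2) (Fin 2) ℂ := !![0, -Complex.I; Complex.I, 0]
/-- The Pauli Z matrix. -/
def PZ : Matrix (Fin 2) (Fin 2) ℂ := !![1, 0; 0, -1]

/-- The single-qubit state `ρ(r) = ½(I + r·σ)` with Bloch vector `r`. -/
def blochRho (r : Fin 3 → ℝ) : Matrix (Fin 2) (Fin 2) ℂ :=
  (2⁻¹ : ℂ) • (1 + (r 0 : ℂ) • PX + (r 1 : ℂ) • PY + (r 2 : ℂ) • PZ)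

/-- Euclidean norm `‖r‖₂` on `ℝ³`. -/
def norm2 (r : Fin 3 → ℝ) : ℝ := Real.sqrt (∑ i, r i ^ 2)

/-- `ℓ¹` norm `‖r‖₁` on `ℝ³`. -/
def norm1 (r : Fin 3 → ℝ) : ℝ := ∑ i, |r i|

/-- Euclidean inner product on `ℝ³`. -/
def dot3 (h r : Fin 3 → ℝ) : ℝ := ∑ i, h i * r i

/-- Von Neumann entropy `S(ρ) = −tr(ρ log ρ)`, computed via the eigenvalues of a
Hermitian matrix (junk value `0` for non-Hermitian input). -/
def vnEntropy {m : Type} [Fintype m] [DecidableEq m] (ρ : Matrix m m ℂ) : ℝ :=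
  if h : ρ.IsHermitian then ∑ i, Real.negMulLog (h.eigenvalues i) else 0

/-- The binary entropy `H₂(p) = −p log p − (1−p) log (1−p)`. -/
def binEnt (p : ℝ) : ℝ := Real.negMulLog p + Real.negMulLog (1 - p)

/-- The minimal eigenvalue `E_gs(H)` of a matrix. -/
def minEig {m : Type} [Fintype m] [DecidableEq m] (H : Matrix m m ℂ) : ℝ :=
  sInf {E : ℝ | ∃ ψ : m → ℂ, ψ ≠ 0 ∧ H.mulVec ψ = (E : ℂ) • ψ}

/-! ### Auxiliary lemmas -/

lemma blochRho_eq (r : Fin 3 → ℝ) :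
    blochRho r = !![((1 + (r 2 : ℂ))/2), (((r 0 : ℂ) - (r 1 : ℂ) * Complex.I)/2);
                    (((r 0 : ℂ) + (r 1 : ℂ) * Complex.I)/2), ((1 - (r 2 : ℂ))/2)] := by
  unfold blochRho PX PY PZ
  rw [Matrix.one_fin_two]
  ext i j
  fin_cases i <;> fin_cases j <;>
    simp [Matrix.add_apply, Matrix.smul_apply] <;> ring

lemma blochRho_isHermitian (r : Fin 3 → ℝ) : (blochRho r).IsHermitian := by
  rw [Matrix.IsHermitian, blochRho_eq]
  ext i j
  fin_cases i <;> fin_cases j <;>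
    simp [Matrix.conjTranspose_apply, Complex.ext_iff]

lemma blochRho_trace (r : Fin 3 → ℝ) : (blochRho r).trace = 1 := by
  rw [blochRho_eq, Matrix.trace_fin_two]
  simp; ring

lemma blochRho_det (r : Fin 3 → ℝ) :
    (blochRho r).det = (((1 - ∑ i, r i ^ 2) / 4 : ℝ) : ℂ) := by
  rw [blochRho_eq, Matrix.det_fin_two_of, Fin.sum_univ_three]
  push_cast
  ring_nf
  rw [Complex.I_sq]
  ring

lemma trace_eq_sum_eigs {n : Type} [Fintype n] [DecidableEq n]
    {A : Matrix n n ℂ} (hA : A.IsHermitian) :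
    A.trace = ∑ i, ((hA.eigenvalues i : ℝ) : ℂ) := by
  conv_lhs => rw [hA.spectral_theorem]
  rw [Unitary.conjStarAlgAut_apply, Matrix.trace_mul_cycle, Unitary.coe_star_mul_self, one_mul, Matrix.trace_diagonal]
  rfl

lemma vnEntropy_blochRho (r : Fin 3 → ℝ) :
    vnEntropy (blochRho r) = binEnt ((1 + norm2 r) / 2) := by
  have hH := blochRho_isHermitian r
  set t : ℝ := norm2 r with htdef
  have ht0 : 0 ≤ t := Real.sqrt_nonneg _
  have ht2 : t ^ 2 = ∑ i, r i ^ 2 := Real.sq_sqrt (by positivity)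
  have hsum : hH.eigenvalues 0 + hH.eigenvalues 1 = 1 := by
    have h1 := trace_eq_sum_eigs hH
    rw [blochRho_trace, Fin.sum_univ_two] at h1
    exact_mod_cast h1.symm
  have hprod : hH.eigenvalues 0 * hH.eigenvalues 1 = (1 - t ^ 2) / 4 := by
    have h1 := hH.det_eq_prod_eigenvalues
    rw [blochRho_det, Fin.prod_univ_two, ← RCLike.ofReal_mul] at h1
    rw [ht2]
    exact (RCLike.ofReal_inj.mp h1).symm
  have hfac : (2 * hH.eigenvalues 0 - 1 - t) * (2 * hH.eigenvalues 0 - 1 + t) = 0 := by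
    linear_combination (-4 : ℝ) * hprod + 4 * hH.eigenvalues 0 * hsum
  rw [vnEntropy, dif_pos hH, Fin.sum_univ_two]
  have h1e : hH.eigenvalues 1 = 1 - hH.eigenvalues 0 := by linarith
  rcases mul_eq_zero.mp hfac with hc | hc
  · have h0 : hH.eigenvalues 0 = (1 + t) / 2 := by linarith
    have h1 : hH.eigenvalues 1 = (1 - t) / 2 := by linarith
    rw [h0, h1, binEnt]
    have : (1 : ℝ) - (1 + t) / 2 = (1 - t) / 2 := by ring
    rw [this]
  · have h0 : hH.eigenvalues 0 = (1 - t) / 2 := by linarith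
    have h1 : hH.eigenvalues 1 = (1 + t) / 2 := by linarith
    rw [h0, h1, binEnt]
    have : (1 : ℝ) - (1 + t) / 2 = (1 - t) / 2 := by ring
    rw [this, add_comm]

lemma binEnt_strictAnti : StrictAntiOn (fun t => binEnt ((1 + t) / 2)) (Set.Icc (0:ℝ) 1) := by
  apply strictAntiOn_of_deriv_neg (convex_Icc 0 1)
  · apply Continuous.continuousOn
    unfold binEnt
    fun_prop
  · intro x hx
    rw [interior_Icc] at hx
    obtain ⟨hx0, hx1⟩ := hx
    have ha : (0:ℝ) < (1 + x) / 2 := by linarith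
    have hb : (0:ℝ) < (1 - x) / 2 := by linarith
    have h1 : HasDerivAt (fun t : ℝ => (1 + t) / 2) (1/2) x := by
      simpa using ((hasDerivAt_id x).const_add 1).div_const 2
    have hA : HasDerivAt (fun t : ℝ => Real.negMulLog ((1 + t) / 2))
        ((-Real.log ((1 + x) / 2) - 1) * (1/2)) x :=
      by exact (Real.hasDerivAt_negMulLog ha.ne').comp x h1
    have h2 : HasDerivAt (fun t : ℝ => 1 - (1 + t) / 2) (-(1/2)) x := h1.const_sub 1
    have hB : HasDerivAt (fun t : ℝ => Real.negMulLog (1 - (1 + t) / 2))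
        ((-Real.log (1 - (1 + x) / 2) - 1) * (-(1/2))) x := by
      have : (1:ℝ) - (1 + x) / 2 ≠ 0 := by
        rw [show (1:ℝ) - (1+x)/2 = (1-x)/2 by ring]; exact hb.ne'
      exact (Real.hasDerivAt_negMulLog this).comp x h2
    have hD : HasDerivAt (fun t : ℝ => binEnt ((1 + t) / 2))
        ((-Real.log ((1 + x) / 2) - 1) * (1/2)
          + (-Real.log (1 - (1 + x) / 2) - 1) * (-(1/2))) x := by
      simpa [binEnt, Pi.add_def] using hA.add hB
    rw [hD.deriv]
    have he : (1:ℝ) - (1 + x) / 2 = (1 - x) / 2 := by ring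
    rw [he]
    have hlog : Real.log ((1 - x) / 2) < Real.log ((1 + x) / 2) :=
      Real.log_lt_log hb (by linarith)
    nlinarith

lemma norm2_le_norm1 (s : Fin 3 → ℝ) : norm2 s ≤ norm1 s := by
  unfold norm2 norm1
  rw [Fin.sum_univ_three, Fin.sum_univ_three]
  rw [show |s 0| + |s 1| + |s 2| = Real.sqrt ((|s 0| + |s 1| + |s 2|) ^ 2) from
    (Real.sqrt_sq (by positivity)).symm]
  apply Real.sqrt_le_sqrt
  nlinarith [abs_nonneg (s 0), abs_nonneg (s 1), abs_nonneg (s 2),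
    sq_abs (s 0), sq_abs (s 1), sq_abs (s 2)]

lemma continuous_norm2 : Continuous norm2 := by
  unfold norm2; fun_prop

lemma continuous_norm1 : Continuous norm1 := by
  unfold norm1; fun_prop

lemma continuous_dot3 (h : Fin 3 → ℝ) : Continuous (dot3 h) := by
  unfold dot3; fun_prop

lemma isCompact_K (h : Fin 3 → ℝ) (E : ℝ) :
    IsCompact {s : Fin 3 → ℝ | norm1 s ≤ 1 ∧ dot3 h s = E} := by
  apply Metric.isCompact_of_isClosed_isBounded
  · exact (isClosed_le continuous_norm1 continuous_const).inter
      (isClosed_eq (continuous_dot3 h) continuous_const)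
  · apply Bornology.IsBounded.subset (Metric.isBounded_closedBall (x := (0 : Fin 3 → ℝ)) (r := 1))
    rintro s ⟨hs1, -⟩
    rw [Metric.mem_closedBall, dist_zero_right]
    rw [pi_norm_le_iff_of_nonneg zero_le_one]
    intro i
    calc ‖s i‖ = |s i| := rfl
      _ ≤ norm1 s := Finset.single_le_sum (fun j _ => abs_nonneg (s j)) (Finset.mem_univ i)
      _ ≤ 1 := hs1

/-- single-qubit heat-detectability criterion. -/
theorem heat_detectability_criterion (r h : Fin 3 → ℝ) (E : ℝ)
    (hr : norm2 r ≤ 1) (hh : norm2 h = 1) (hE : E = dot3 h r)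
    (hne : {s : Fin 3 → ℝ | norm1 s ≤ 1 ∧ dot3 h s = E}.Nonempty) :
    vnEntropy (blochRho r) <
        sInf ((fun s => vnEntropy (blochRho s)) ''
          {s : Fin 3 → ℝ | norm1 s ≤ 1 ∧ dot3 h s = E}) ↔
      norm2 r > sSup (norm2 '' {s : Fin 3 → ℝ | norm1 s ≤ 1 ∧ dot3 h s = E}) := by
  set K := {s : Fin 3 → ℝ | norm1 s ≤ 1 ∧ dot3 h s = E} with hKdef
  have hcK : IsCompact K := isCompact_K h E
  have himg : IsCompact (norm2 '' K) := hcK.image continuous_norm2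
  set R : ℝ := sSup (norm2 '' K) with hRdef
  obtain ⟨sstar, hsK, hsR⟩ : R ∈ norm2 '' K := himg.sSup_mem (hne.image _)
  have hR0 : 0 ≤ R := hsR ▸ Real.sqrt_nonneg _
  have hR1 : R ≤ 1 := hsR ▸ (norm2_le_norm1 sstar).trans hsK.1
  have hRmem : R ∈ Set.Icc (0:ℝ) 1 := ⟨hR0, hR1⟩
  have hub : ∀ s ∈ K, norm2 s ≤ R := fun s hs => le_csSup himg.bddAbove ⟨s, hs, rfl⟩
  have hInf : sInf ((fun s => vnEntropy (blochRho s)) '' K) = binEnt ((1 + R) / 2) := by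
    apply IsLeast.csInf_eq
    constructor
    · exact ⟨sstar, hsK, by show vnEntropy (blochRho sstar) = _; rw [vnEntropy_blochRho, hsR]⟩
    · rintro x ⟨s, hsK', rfl⟩
      show binEnt ((1 + R) / 2) ≤ vnEntropy (blochRho s)
      rw [vnEntropy_blochRho]
      have hs1 : norm2 s ∈ Set.Icc (0:ℝ) 1 :=
        ⟨Real.sqrt_nonneg _, (norm2_le_norm1 s).trans hsK'.1⟩
      rcases eq_or_lt_of_le (hub s hsK') with heq | hlt
      · rw [heq]
      · exact le_of_lt (binEnt_strictAnti hs1 hRmem hlt)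
  rw [hInf, vnEntropy_blochRho r]
  have hrmem : norm2 r ∈ Set.Icc (0:ℝ) 1 := ⟨Real.sqrt_nonneg _, hr⟩
  constructor
  · intro hlt
    by_contra hle
    push_neg at hle
    rcases eq_or_lt_of_le hle with heq | hlt'
    · rw [heq] at hlt; exact lt_irrefl _ hlt
    · exact absurd hlt (not_lt_of_gt (binEnt_strictAnti hrmem hRmem hlt'))
  · intro hgt
    exact binEnt_strictAnti hRmem hrmem hgt
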